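/- The polynomial Q(λ₁,λ₂,λ₃) = -λ₁²λ₂² + 2λ₁²λ₂λ₃ - λ₁²λ₃² + 2λ₁λ₂²λ₃ + 2λ₁λ₂λ₃² - λ₂²λ₃² is irreducible in ℂ[λ₁,λ₂,λ₃]. -/

import Mathlib

open MvPolynomial

set_option maxHeartbeats 1000000
set_option synthInstance.maxHeartbeats 400000

noncomputable section CayleyAux

namespace CayleyAux

abbrev Rr : Type := MvPolynomial (Fin 2) ℂ
abbrev Kk : Type := FractionRing Rr

lemma primeX0 : Prime (MvPolynomial.X 0 : Rr) := by
  rw [← MulEquiv.prime_iff (MvPolynomial.finSuccEquiv ℂ 1).toMulEquiv]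
  have : (MvPolynomial.finSuccEquiv ℂ 1).toMulEquiv (MvPolynomial.X 0) = Polynomial.X := by
    simp [MvPolynomial.finSuccEquiv_X_zero]
  rw [this]
  exact Polynomial.prime_X

lemma primeX1 : Prime (MvPolynomial.X 1 : Rr) := by
  rw [← MulEquiv.prime_iff (MvPolynomial.renameEquiv ℂ (Equiv.swap (0 : Fin 2) 1)).toMulEquiv]
  have : (MvPolynomial.renameEquiv ℂ (Equiv.swap (0 : Fin 2) 1)).toMulEquiv
      (MvPolynomial.X 1) = (MvPolynomial.X 0 : Rr) := by
    simp [MvPolynomial.renameEquiv_apply, Equiv.swap_apply_right]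
  rw [this]
  exact primeX0

lemma ndvd01 : ¬ (MvPolynomial.X 0 : Rr) ∣ MvPolynomial.X 1 := by
  rintro ⟨c, hc⟩
  have := congrArg (MvPolynomial.eval (fun j : Fin 2 => if j = 0 then 0 else 1)) hc
  simp at this

lemma ndvd10 : ¬ (MvPolynomial.X 1 : Rr) ∣ MvPolynomial.X 0 := by
  rintro ⟨c, hc⟩
  have := congrArg (MvPolynomial.eval (fun j : Fin 2 => if j = 0 then 1 else 0)) hc
  simp at this

lemma X0_ne_zero : (MvPolynomial.X 0 : Rr) ≠ 0 := MvPolynomial.X_ne_zero 0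
lemma X1_ne_zero : (MvPolynomial.X 1 : Rr) ≠ 0 := MvPolynomial.X_ne_zero 1

def c2 : Rr := -(MvPolynomial.X 0 - MvPolynomial.X 1) ^ 2
def c1 : Rr := 2 * MvPolynomial.X 0 * MvPolynomial.X 1 * (MvPolynomial.X 0 + MvPolynomial.X 1)
def c0 : Rr := -(MvPolynomial.X 0 ^ 2 * MvPolynomial.X 1 ^ 2)

lemma c2_ne_zero : c2 ≠ 0 := by
  rw [c2, neg_ne_zero]
  exact pow_ne_zero _ (sub_ne_zero.mpr (fun h => zero_ne_one
    ((MvPolynomial.X_injective h : (0 : Fin 2) = 1) ▸ rfl : ((0 : Fin 2) : Fin 2) = 1) |>.elim))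

lemma c0_ne_zero : c0 ≠ 0 := by
  rw [c0, neg_ne_zero]
  exact mul_ne_zero (pow_ne_zero _ X0_ne_zero) (pow_ne_zero _ X1_ne_zero)

def P : Polynomial Rr :=
  Polynomial.C c2 * Polynomial.X ^ 2 + Polynomial.C c1 * Polynomial.X + Polynomial.C c0

lemma P_coeff_zero : P.coeff 0 = c0 := by
  simp [P, Polynomial.coeff_add, Polynomial.coeff_C_mul, Polynomial.coeff_X_pow]

lemma P_coeff_two : P.coeff 2 = c2 := by
  simp [P, Polynomial.coeff_add, Polynomial.coeff_C_mul, Polynomial.coeff_X_pow,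
    Polynomial.coeff_C]

lemma P_primitive : P.IsPrimitive := by
  intro r hr
  rw [Polynomial.C_dvd_iff_dvd_coeff] at hr
  have h0 : r ∣ c0 := P_coeff_zero ▸ hr 0
  have h2 : r ∣ c2 := P_coeff_two ▸ hr 2
  by_contra hu
  have hr0 : r ≠ 0 := by
    rintro rfl
    exact c0_ne_zero (zero_dvd_iff.mp h0)
  obtain ⟨q, hqirr, hqr⟩ := WfDvdMonoid.exists_irreducible_factor hu hr0
  have hq : Prime q := (UniqueFactorizationMonoid.irreducible_iff_prime).mp hqirr
  have hq0 : q ∣ MvPolynomial.X 0 ^ 2 * MvPolynomial.X 1 ^ 2 := by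
    have := hqr.trans h0
    rwa [c0, dvd_neg] at this
  have : q ∣ MvPolynomial.X 0 ∨ q ∣ MvPolynomial.X 1 := by
    rcases hq.2.2 _ _ hq0 with h | h
    · exact Or.inl (hq.dvd_of_dvd_pow h)
    · exact Or.inr (hq.dvd_of_dvd_pow h)
  have key : ∀ i : Fin 2, Prime (MvPolynomial.X i : Rr) → q ∣ MvPolynomial.X i →
      (MvPolynomial.X i : Rr) ∣ (MvPolynomial.X 0 - MvPolynomial.X 1) ^ 2 → False := by
    intro i hXp hqX hdvd'
    have hXq : (MvPolynomial.X i : Rr) ∣ q := hqirr.dvd_symm hXp.irreducible hqX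
    have : (MvPolynomial.X i : Rr) ∣ MvPolynomial.X 0 - MvPolynomial.X 1 :=
      hXp.dvd_of_dvd_pow hdvd'
    fin_cases i
    · exact ndvd01 (by
        have : (MvPolynomial.X 0 : Rr) ∣
            MvPolynomial.X 0 - (MvPolynomial.X 0 - MvPolynomial.X 1) := dvd_sub dvd_rfl this
        simpa using this)
    · exact ndvd10 (by
        have : (MvPolynomial.X 1 : Rr) ∣
            (MvPolynomial.X 0 - MvPolynomial.X 1) + MvPolynomial.X 1 := dvd_add this dvd_rfl
        simpa using this)
  have hq2 : q ∣ (MvPolynomial.X 0 - MvPolynomial.X 1) ^ 2 := by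
    have := hqr.trans h2
    rwa [c2, dvd_neg] at this
  rcases this with h | h
  · exact key 0 primeX0 h ((hqirr.dvd_symm primeX0.irreducible h).trans hq2)
  · exact key 1 primeX1 h ((hqirr.dvd_symm primeX1.irreducible h).trans hq2)

lemma no_root (z : Kk) :
    ¬ (algebraMap Rr Kk c2 * z ^ 2 + algebraMap Rr Kk c1 * z + algebraMap Rr Kk c0 = 0) := by
  intro hroot
  set φ := algebraMap Rr Kk with hφ
  have hinj : Function.Injective φ := IsFractionRing.injective Rr Kk
  set w : Kk := 2 * φ c2 * z + φ c1 with hw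
  have hc : c1 ^ 2 - 4 * c2 * c0 =
      (4 * MvPolynomial.X 0 * MvPolynomial.X 1) ^ 2 * (MvPolynomial.X 0 * MvPolynomial.X 1) := by
    rw [c1, c2, c0]; ring
  have hkey : w ^ 2 = φ c1 ^ 2 - 4 * φ c2 * φ c0 := by
    rw [hw]; linear_combination (4 * φ c2) * hroot
  have hkey2 : w ^ 2 = φ ((4 * MvPolynomial.X 0 * MvPolynomial.X 1) ^ 2 *
      (MvPolynomial.X 0 * MvPolynomial.X 1)) := by
    rw [hkey, ← hc]
    push_cast [map_sub, map_mul, map_pow, map_ofNat]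
    ring
  have hd_ne : φ (4 * MvPolynomial.X 0 * MvPolynomial.X 1) ≠ 0 := by
    intro h
    have : (4 * MvPolynomial.X 0 * MvPolynomial.X 1 : Rr) = 0 := hinj (by simpa using h)
    have h4 : (4 : Rr) ≠ 0 := by norm_num
    exact (mul_ne_zero (mul_ne_zero h4 X0_ne_zero) X1_ne_zero) this
  set u : Kk := w / φ (4 * MvPolynomial.X 0 * MvPolynomial.X 1) with hu
  have hu2 : u ^ 2 = φ (MvPolynomial.X 0 * MvPolynomial.X 1) := by
    rw [hu, div_pow, hkey2, map_mul, map_pow]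
    exact mul_div_cancel_left₀ _ (pow_ne_zero _ hd_ne)
  have hint : IsIntegral Rr u := by
    refine ⟨Polynomial.X ^ 2 - Polynomial.C (MvPolynomial.X 0 * MvPolynomial.X 1),
      Polynomial.monic_X_pow_sub_C _ (by norm_num), ?_⟩
    simp [Polynomial.eval₂_sub, Polynomial.eval₂_pow, hu2, hφ]
  obtain ⟨v, hv⟩ := IsIntegrallyClosed.isIntegral_iff.mp hint
  have hv2 : v ^ 2 = MvPolynomial.X 0 * MvPolynomial.X 1 := by
    apply hinj
    rw [map_pow, hv, hu2]
  have hX0v : (MvPolynomial.X 0 : Rr) ∣ v := by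
    apply primeX0.dvd_of_dvd_pow (n := 2)
    rw [hv2]
    exact Dvd.intro _ rfl
  obtain ⟨s, hs⟩ := hX0v
  have : MvPolynomial.X 0 * (MvPolynomial.X 0 * s ^ 2) =
      MvPolynomial.X 0 * MvPolynomial.X 1 := by
    rw [← hv2, hs]; ring
  have : (MvPolynomial.X 0 : Rr) * s ^ 2 = MvPolynomial.X 1 :=
    mul_left_cancel₀ X0_ne_zero this
  exact ndvd01 ⟨s ^ 2, this.symm⟩

lemma P_irreducible : Irreducible P := by
  apply P_primitive.irreducible_of_irreducible_map_of_injective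
    (IsFractionRing.injective Rr Kk)
  set φ := algebraMap Rr Kk with hφ
  have hmap : P.map φ = Polynomial.C (φ c2) * Polynomial.X ^ 2 +
      Polynomial.C (φ c1) * Polynomial.X + Polynomial.C (φ c0) := by
    simp [P, Polynomial.map_add, Polynomial.map_mul, Polynomial.map_pow]
  rw [hmap]
  have hc2' : φ c2 ≠ 0 := fun h =>
    c2_ne_zero ((map_eq_zero_iff φ (IsFractionRing.injective Rr Kk)).mp h)
  have hdeg : (Polynomial.C (φ c2) * Polynomial.X ^ 2 + Polynomial.C (φ c1) * Polynomial.X +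
      Polynomial.C (φ c0)).natDegree = 2 := Polynomial.natDegree_quadratic hc2'
  have hne : (Polynomial.C (φ c2) * Polynomial.X ^ 2 + Polynomial.C (φ c1) * Polynomial.X +
      Polynomial.C (φ c0)) ≠ 0 := by
    intro h
    rw [h] at hdeg
    simp at hdeg
  rw [Polynomial.irreducible_iff_roots_eq_zero_of_degree_le_three (by omega) (by omega)]
  rw [Multiset.eq_zero_iff_forall_notMem]
  intro z hz
  rw [Polynomial.mem_roots hne, Polynomial.IsRoot] at hz
  apply no_root z
  simpa using hz

end CayleyAux

end CayleyAux

open CayleyAux in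
/-- The Cayley condition polynomial
`Q = -λ₁²λ₂² + 2λ₁²λ₂λ₃ - λ₁²λ₃² + 2λ₁λ₂²λ₃ + 2λ₁λ₂λ₃² - λ₂²λ₃²`
is irreducible in `ℂ[λ₁,λ₂,λ₃]`. -/
theorem cayley_polynomial_irreducible :
    Irreducible
      (-(X 0 ^ 2 * X 1 ^ 2) + 2 * X 0 ^ 2 * X 1 * X 2 - X 0 ^ 2 * X 2 ^ 2
        + 2 * X 0 * X 1 ^ 2 * X 2 + 2 * X 0 * X 1 * X 2 ^ 2 - X 1 ^ 2 * X 2 ^ 2 :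
        MvPolynomial (Fin 3) ℂ) := by
  have hmap : (MvPolynomial.finSuccEquiv ℂ 2)
      (-(X 0 ^ 2 * X 1 ^ 2) + 2 * X 0 ^ 2 * X 1 * X 2 - X 0 ^ 2 * X 2 ^ 2
        + 2 * X 0 * X 1 ^ 2 * X 2 + 2 * X 0 * X 1 * X 2 ^ 2 - X 1 ^ 2 * X 2 ^ 2 :
        MvPolynomial (Fin 3) ℂ) = P := by
    have h1 : (X 1 : MvPolynomial (Fin 3) ℂ) = X (Fin.succ 0) := rfl
    have h2 : (X 2 : MvPolynomial (Fin 3) ℂ) = X (Fin.succ 1) := rfl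
    rw [h1, h2]
    simp only [map_add, map_sub, map_neg, map_mul, map_pow, map_ofNat,
      MvPolynomial.finSuccEquiv_X_zero, MvPolynomial.finSuccEquiv_X_succ]
    rw [P, c0, c1, c2]
    simp only [map_add, map_sub, map_neg, map_mul, map_pow, map_ofNat]
    ring
  exact (MulEquiv.irreducible_iff (MvPolynomial.finSuccEquiv ℂ 2)).mp
    (hmap ▸ P_irreducible)
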